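/- Let k ≥ 2 and let c_i ∈ ℝ and (a_i,b_i) ∈ ℝ² for 1 ≤ i ≤ k, where the pairs (a_i,b_i) are pairwise distinct and all different from (0,0), and set f(t) := 1 + Σ_{i=1}^k c_i t^{a_i}(1−t)^{b_i}. If f has exactly r roots in the open interval (0,1), then there exist real numbers c̃₁,…,c̃_k such that f̃(t) := 1 + Σ_{i=1}^k c̃_i t^{a_i}(1−t)^{b_i} has at least r roots in (0,1) and no root of f̃ in (0,1) is degenerate. -/

import Mathlib

open Real Set MeasureTheory

section Aux

variable {k : ℕ}

private lemma diffAux (c : Fin k → ℝ) (e : Fin k → ℝ × ℝ) {t : ℝ} (h1 : 0 < t) (h2 : t < 1) :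
    DifferentiableAt ℝ (fun s : ℝ => 1 + ∑ i, c i * s ^ (e i).1 * (1 - s) ^ (e i).2) t := by
  apply (differentiableAt_const (1 : ℝ)).add
  apply DifferentiableAt.fun_sum
  intro i _
  have ha : DifferentiableAt ℝ (fun s : ℝ => s ^ (e i).1) t :=
    differentiableAt_fun_id.rpow_const (Or.inl h1.ne')
  have hb : DifferentiableAt ℝ (fun s : ℝ => (1 - s) ^ (e i).2) t :=
    ((differentiableAt_const (1 : ℝ)).sub differentiableAt_fun_id).rpow_const
      (Or.inl (by linarith : (0:ℝ) < 1 - t).ne')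
  exact (ha.const_mul (c i)).mul hb

private lemma scaleAux (c : Fin k → ℝ) (e : Fin k → ℝ × ℝ) {δ : ℝ} (hδ : (1:ℝ) - δ ≠ 0) (t : ℝ) :
    1 + ∑ i, (c i / (1 - δ)) * t ^ (e i).1 * (1 - t) ^ (e i).2 =
      ((1 + ∑ i, c i * t ^ (e i).1 * (1 - t) ^ (e i).2) - δ) / (1 - δ) := by
  have hs : ∑ i, (c i / (1 - δ)) * t ^ (e i).1 * (1 - t) ^ (e i).2
      = (∑ i, c i * t ^ (e i).1 * (1 - t) ^ (e i).2) / (1 - δ) := by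
    rw [Finset.sum_div]; exact Finset.sum_congr rfl fun i _ => by ring
  rw [hs]
  field_simp
  ring

private lemma sardAux (c : Fin k → ℝ) (e : Fin k → ℝ × ℝ) :
    volume ((fun t : ℝ => 1 + ∑ i, c i * t ^ (e i).1 * (1 - t) ^ (e i).2) ''
      {t : ℝ | t ∈ Ioo (0:ℝ) 1 ∧
        deriv (fun s : ℝ => 1 + ∑ i, c i * s ^ (e i).1 * (1 - s) ^ (e i).2) t = 0}) = 0 := by
  set f := fun t : ℝ => 1 + ∑ i, c i * t ^ (e i).1 * (1 - t) ^ (e i).2 with hfdef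
  set K := {t : ℝ | t ∈ Ioo (0:ℝ) 1 ∧ deriv f t = 0} with hK
  apply addHaar_image_eq_zero_of_det_fderivWithin_eq_zero (μ := volume) (f := f)
      (f' := fun _ => (0 : ℝ →L[ℝ] ℝ))
  · intro x hx
    have hd : HasDerivAt f 0 x := by
      have h := (diffAux c e hx.1.1 hx.1.2).hasDerivAt
      rwa [hx.2] at h
    have h2 := hd.hasFDerivAt.hasFDerivWithinAt (s := K)
    have h3 : ContinuousLinearMap.toSpanSingleton ℝ (0:ℝ) = 0 := by ext y; simp
    rw [h3] at h2
    exact h2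
  · intro x _
    simp [ContinuousLinearMap.det]

private lemma sepAux (T : Finset ℝ) (hT : ∀ ζ ∈ T, ζ ∈ Ioo (0:ℝ) 1) :
    ∃ η > 0, ∀ ζ ∈ T, (0 < ζ - η ∧ ζ + η < 1) ∧ ∀ ζ' ∈ T, ζ' ≠ ζ → 2 * η ≤ |ζ - ζ'| := by
  classical
  rcases T.eq_empty_or_nonempty with h | hne
  · exact ⟨1, one_pos, by simp [h]⟩
  set A : Finset ℝ := (T.image (fun ζ => ζ) ∪ T.image (fun ζ => 1 - ζ)) ∪
      ((T ×ˢ T).filter (fun p => p.1 ≠ p.2)).image (fun p => |p.1 - p.2|) with hA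
  have hAne : A.Nonempty := by
    obtain ⟨ζ, hζ⟩ := hne
    exact ⟨ζ, Finset.mem_union_left _ (Finset.mem_union_left _ (Finset.mem_image_of_mem _ hζ))⟩
  set m := A.min' hAne with hm
  have hmpos : 0 < m := by
    rw [Finset.lt_min'_iff]
    intro y hy
    simp only [hA, Finset.mem_union, Finset.mem_image, Finset.mem_filter, Finset.mem_product] at hy
    rcases hy with (⟨ζ, hζ, rfl⟩ | ⟨ζ, hζ, rfl⟩) | ⟨p, ⟨⟨h1, h2⟩, hne'⟩, rfl⟩
    · exact (hT ζ hζ).1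
    · linarith [(hT ζ hζ).2]
    · exact abs_pos.mpr (sub_ne_zero.mpr hne')
  refine ⟨m / 2, by linarith, fun ζ hζ => ⟨⟨?_, ?_⟩, fun ζ' hζ' hne' => ?_⟩⟩
  · have : m ≤ ζ := A.min'_le _ (Finset.mem_union_left _ (Finset.mem_union_left _ (Finset.mem_image_of_mem _ hζ)))
    linarith [(hT ζ hζ).1]
  · have : m ≤ 1 - ζ := A.min'_le _ (Finset.mem_union_left _ (Finset.mem_union_right _ (Finset.mem_image_of_mem _ hζ)))
    linarith
  · have : m ≤ |ζ - ζ'| := by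
      apply A.min'_le
      apply Finset.mem_union_right
      rw [Finset.mem_image]
      refine ⟨(ζ, ζ'), ?_, rfl⟩
      simp only [Finset.mem_filter, Finset.mem_product]
      exact ⟨⟨hζ, hζ'⟩, hne'.symm⟩
    linarith

private lemma ivtLeft {f : ℝ → ℝ} {a b δ : ℝ} (hab : a < b)
    (hf : ContinuousOn f (Icc a b)) (hb : f b = 0) (hδ : 0 < δ) (hδa : δ < |f a|) :
    ∃ s, (s = (1:ℝ) ∨ s = -1) ∧ ∃ x ∈ Ioo a b, f x = s * δ := by
  rcases lt_or_ge 0 (f a) with h | h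
  · have : δ ∈ Ioo (f b) (f a) := ⟨by rw [hb]; exact hδ, by rwa [abs_of_pos h] at hδa⟩
    obtain ⟨x, hx, hfx⟩ := intermediate_value_Ioo' hab.le hf this
    exact ⟨1, Or.inl rfl, x, hx, by rw [hfx]; ring⟩
  · have hfa : f a < 0 := lt_of_le_of_ne h (fun h' => by rw [h', abs_zero] at hδa; linarith)
    have habs : |f a| = -(f a) := abs_of_neg hfa
    have : -δ ∈ Ioo (f a) (f b) := ⟨by rw [habs] at hδa; linarith, by rw [hb]; linarith⟩
    obtain ⟨x, hx, hfx⟩ := intermediate_value_Ioo hab.le hf this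
    exact ⟨-1, Or.inr rfl, x, hx, by rw [hfx]; ring⟩

private lemma ivtRight {f : ℝ → ℝ} {a b δ : ℝ} (hab : a < b)
    (hf : ContinuousOn f (Icc a b)) (ha : f a = 0) (hδ : 0 < δ) (hδb : δ < |f b|) :
    ∃ s, (s = (1:ℝ) ∨ s = -1) ∧ ∃ x ∈ Ioo a b, f x = s * δ := by
  rcases lt_or_ge 0 (f b) with h | h
  · have : δ ∈ Ioo (f a) (f b) := ⟨by rw [ha]; exact hδ, by rwa [abs_of_pos h] at hδb⟩
    obtain ⟨x, hx, hfx⟩ := intermediate_value_Ioo hab.le hf this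
    exact ⟨1, Or.inl rfl, x, hx, by rw [hfx]; ring⟩
  · have hfb : f b < 0 := lt_of_le_of_ne h (fun h' => by rw [h', abs_zero] at hδb; linarith)
    have habs : |f b| = -(f b) := abs_of_neg hfb
    have : -δ ∈ Ioo (f b) (f a) := ⟨by rw [habs] at hδb; linarith, by rw [ha]; linarith⟩
    obtain ⟨x, hx, hfx⟩ := intermediate_value_Ioo' hab.le hf this
    exact ⟨-1, Or.inr rfl, x, hx, by rw [hfx]; ring⟩

end Aux

/-- If `f(t) = 1 + ∑ i, c i * t ^ (a i) * (1−t) ^ (b i)` (pairwise distinct exponent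
pairs, none `(0,0)`, `k ≥ 2`) has exactly `r` roots in `(0,1)`, then the coefficients
can be perturbed so that the new function has at least `r` roots in `(0,1)`, none of
which is degenerate (a root `ζ` is degenerate if the function and its derivative both
vanish at `ζ`). -/
theorem perturb_to_nondegenerate_roots
    (k : ℕ) (hk : 2 ≤ k) (c : Fin k → ℝ) (e : Fin k → ℝ × ℝ)
    (he : Function.Injective e) (he0 : ∀ i, e i ≠ (0, 0)) (r : ℕ)
    (hr : {t : ℝ | t ∈ Set.Ioo (0 : ℝ) 1 ∧
        1 + ∑ i, c i * t ^ (e i).1 * (1 - t) ^ (e i).2 = 0}.encard = r) :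
    ∃ c' : Fin k → ℝ,
      (r : ℕ∞) ≤ {t : ℝ | t ∈ Set.Ioo (0 : ℝ) 1 ∧
          1 + ∑ i, c' i * t ^ (e i).1 * (1 - t) ^ (e i).2 = 0}.encard ∧
      ∀ t ∈ Set.Ioo (0 : ℝ) 1,
        1 + ∑ i, c' i * t ^ (e i).1 * (1 - t) ^ (e i).2 = 0 →
        deriv (fun s : ℝ => 1 + ∑ i, c' i * s ^ (e i).1 * (1 - s) ^ (e i).2) t ≠ 0 := by
  classical
  set f := fun t : ℝ => 1 + ∑ i, c i * t ^ (e i).1 * (1 - t) ^ (e i).2 with hfdef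
  -- trivial case r = 0
  rcases Nat.eq_zero_or_pos r with hr0 | hrpos
  · subst hr0
    refine ⟨c, by simp, ?_⟩
    intro t ht hroot _
    have hmem : t ∈ {t : ℝ | t ∈ Set.Ioo (0:ℝ) 1 ∧ f t = 0} := ⟨ht, hroot⟩
    have hS : {t : ℝ | t ∈ Set.Ioo (0:ℝ) 1 ∧ f t = 0} = ∅ := by
      apply Set.encard_eq_zero.mp
      simpa using hr
    rw [hS] at hmem
    exact hmem
  -- the root set is finite with r elements
  have hfin : {t : ℝ | t ∈ Set.Ioo (0:ℝ) 1 ∧ f t = 0}.Finite :=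
    Set.finite_of_encard_eq_coe hr
  set T := hfin.toFinset with hTdef
  have hmemT : ∀ ζ, ζ ∈ T ↔ ζ ∈ Set.Ioo (0:ℝ) 1 ∧ f ζ = 0 := by
    intro ζ; rw [hTdef, Set.Finite.mem_toFinset]; rfl
  have hcardT : T.card = r := by
    have := hfin.encard_eq_coe_toFinset_card
    rw [hr] at this
    exact_mod_cast this.symm
  have hTne : T.Nonempty := by
    rw [← Finset.card_pos, hcardT]; exact hrpos
  -- separation radius
  obtain ⟨η, hηpos, hsep⟩ := sepAux T (fun ζ hζ => ((hmemT ζ).mp hζ).1)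
  -- key uniqueness: points η-close to two roots force equality
  have hkey : ∀ ζ ∈ T, ∀ ζ' ∈ T, ∀ x : ℝ, |x - ζ| < η → |x - ζ'| < η → ζ = ζ' := by
    intro ζ hζ ζ' hζ' x h1 h2
    by_contra hne
    have h3 := (hsep ζ hζ).2 ζ' hζ' (Ne.symm hne)
    have : |ζ - ζ'| ≤ |x - ζ| + |x - ζ'| := by
      calc |ζ - ζ'| = |(x - ζ') - (x - ζ)| := by ring_nf
        _ ≤ |x - ζ'| + |x - ζ| := abs_sub _ _
        _ = |x - ζ| + |x - ζ'| := by ring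
    linarith
  -- continuity of f on closed subintervals of (0,1)
  have hcont : ∀ a b : ℝ, 0 < a → b < 1 → ContinuousOn f (Icc a b) := by
    intro a b ha hb x hx
    exact ((diffAux c e (lt_of_lt_of_le ha hx.1) (lt_of_le_of_lt hx.2 hb)).continuousAt).continuousWithinAt
  -- the test points are not roots
  have hnotroot : ∀ ζ ∈ T, f (ζ - η/2) ≠ 0 ∧ f (ζ + η/2) ≠ 0 := by
    intro ζ hζ
    obtain ⟨⟨hb1, hb2⟩, _⟩ := hsep ζ hζ
    constructor
    · intro h0
      have hm : (ζ - η/2) ∈ T := (hmemT _).mpr ⟨⟨by linarith, by linarith [((hmemT ζ).mp hζ).1.2]⟩, h0⟩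
      have heq := hkey ζ hζ (ζ - η/2) hm ζ (by simpa using hηpos)
        (by rw [show ζ - (ζ - η/2) = η/2 by ring, abs_of_pos (by linarith)]; linarith)
      linarith [heq]
    · intro h0
      have hm : (ζ + η/2) ∈ T := (hmemT _).mpr ⟨⟨by linarith [((hmemT ζ).mp hζ).1.1], by linarith⟩, h0⟩
      have heq := hkey ζ hζ (ζ + η/2) hm ζ (by simpa using hηpos)
        (by rw [show ζ - (ζ + η/2) = -(η/2) by ring, abs_neg, abs_of_pos (by linarith)]; linarith)
      linarith [heq]
  -- the positive threshold δ₀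
  set M : Finset ℝ := T.image (fun ζ => min |f (ζ - η/2)| |f (ζ + η/2)|) with hM
  have hMne : M.Nonempty := hTne.image _
  set δ₀ := M.min' hMne with hδ₀
  have hδ₀pos : 0 < δ₀ := by
    rw [Finset.lt_min'_iff]
    intro y hy
    simp only [hM, Finset.mem_image] at hy
    obtain ⟨ζ, hζ, rfl⟩ := hy
    obtain ⟨h1, h2⟩ := hnotroot ζ hζ
    exact lt_min (abs_pos.mpr h1) (abs_pos.mpr h2)
  have hδ₀le : ∀ ζ ∈ T, δ₀ ≤ |f (ζ - η/2)| ∧ δ₀ ≤ |f (ζ + η/2)| := by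
    intro ζ hζ
    have := M.min'_le _ (Finset.mem_image_of_mem _ hζ)
    exact ⟨le_trans this (min_le_left _ _), le_trans this (min_le_right _ _)⟩
  -- critical values
  set V := f '' {t : ℝ | t ∈ Ioo (0:ℝ) 1 ∧ deriv f t = 0} with hV
  have hVnull : volume V = 0 := sardAux c e
  -- choose a good δ
  have hBnull : volume (V ∪ (-V)) = 0 :=
    measure_union_null hVnull (by rw [Measure.measure_neg]; exact hVnull)
  have hne2 : (Ioo (0:ℝ) (min δ₀ 1) \ (V ∪ (-V))).Nonempty := by
    apply nonempty_of_measure_ne_zero (μ := volume)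
    rw [measure_diff_null hBnull, Real.volume_Ioo]
    simp only [ne_eq, ENNReal.ofReal_eq_zero, not_le, sub_zero]
    exact lt_min hδ₀pos one_pos
  obtain ⟨δ, ⟨hδ0, hδm⟩, hδB⟩ := hne2
  have hδδ₀ : δ < δ₀ := lt_of_lt_of_le hδm (min_le_left _ _)
  have hδ1 : δ < 1 := lt_of_lt_of_le hδm (min_le_right _ _)
  have hδV : δ ∉ V := fun h => hδB (Or.inl h)
  have hδV' : -δ ∉ V := fun h => hδB (Or.inr (Set.mem_neg.mpr h))
  -- solutions near each root
  have hsol : ∀ ζ ∈ T, ∃ sl xl sr xr : ℝ,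
      (sl = 1 ∨ sl = -1) ∧ xl ∈ Ioo (ζ - η) ζ ∧ f xl = sl * δ ∧
      (sr = 1 ∨ sr = -1) ∧ xr ∈ Ioo ζ (ζ + η) ∧ f xr = sr * δ := by
    intro ζ hζ
    obtain ⟨⟨hb1, hb2⟩, _⟩ := hsep ζ hζ
    obtain ⟨hζ01, hζroot⟩ := (hmemT ζ).mp hζ
    obtain ⟨hd1, hd2⟩ := hδ₀le ζ hζ
    obtain ⟨sl, hsl, xl, hxl, hfxl⟩ := ivtLeft (f := f) (a := ζ - η/2) (b := ζ)
      (by linarith) (hcont _ _ (by linarith) hζ01.2) hζroot hδ0 (lt_of_lt_of_le hδδ₀ hd1)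
    obtain ⟨sr, hsr, xr, hxr, hfxr⟩ := ivtRight (f := f) (a := ζ) (b := ζ + η/2)
      (by linarith) (hcont _ _ hζ01.1 (by linarith)) hζroot hδ0 (lt_of_lt_of_le hδδ₀ hd2)
    exact ⟨sl, xl, sr, xr, hsl, ⟨by linarith [hxl.1], hxl.2⟩, hfxl,
      hsr, ⟨hxr.1, by linarith [hxr.2]⟩, hfxr⟩
  choose! sL xL sR xR hspec using hsol
  -- core counting lemma
  have Hcount : ∀ s : ℝ,
      r ≤ (T.filter (fun ζ => sL ζ = s)).card + (T.filter (fun ζ => sR ζ = s)).card →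
      (r : ℕ∞) ≤ {t : ℝ | t ∈ Ioo (0:ℝ) 1 ∧ f t = s * δ}.encard := by
    intro s hcnt
    set FL := T.filter (fun ζ => sL ζ = s) with hFL
    set FR := T.filter (fun ζ => sR ζ = s) with hFR
    have hxLmem : ∀ ζ ∈ T, xL ζ ∈ Ioo (ζ - η) ζ ∧ f (xL ζ) = sL ζ * δ :=
      fun ζ hζ => ⟨(hspec ζ hζ).2.1, (hspec ζ hζ).2.2.1⟩
    have hxRmem : ∀ ζ ∈ T, xR ζ ∈ Ioo ζ (ζ + η) ∧ f (xR ζ) = sR ζ * δ :=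
      fun ζ hζ => ⟨(hspec ζ hζ).2.2.2.2.1, (hspec ζ hζ).2.2.2.2.2⟩
    have habsL : ∀ ζ ∈ T, |xL ζ - ζ| < η := by
      intro ζ hζ
      have h := (hxLmem ζ hζ).1
      rw [abs_sub_lt_iff]; constructor <;> [linarith [h.2]; linarith [h.1]]
    have habsR : ∀ ζ ∈ T, |xR ζ - ζ| < η := by
      intro ζ hζ
      have h := (hxRmem ζ hζ).1
      rw [abs_sub_lt_iff]; constructor <;> [linarith [h.2]; linarith [h.1]]
    have hinjL : Set.InjOn xL FL := by
      intro ζ hζ ζ' hζ' hx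
      simp only [hFL, Finset.coe_filter, Set.mem_setOf_eq] at hζ hζ'
      exact hkey ζ hζ.1 ζ' hζ'.1 (xL ζ) (habsL ζ hζ.1) (by rw [hx]; exact habsL ζ' hζ'.1)
    have hinjR : Set.InjOn xR FR := by
      intro ζ hζ ζ' hζ' hx
      simp only [hFR, Finset.coe_filter, Set.mem_setOf_eq] at hζ hζ'
      exact hkey ζ hζ.1 ζ' hζ'.1 (xR ζ) (habsR ζ hζ.1) (by rw [hx]; exact habsR ζ' hζ'.1)
    have hdisj : Disjoint (FL.image xL) (FR.image xR) := by
      rw [Finset.disjoint_left]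
      intro x hxL hxR
      obtain ⟨ζ, hζ, rfl⟩ := Finset.mem_image.mp hxL
      obtain ⟨ζ', hζ', hx⟩ := Finset.mem_image.mp hxR
      have hζT : ζ ∈ T := Finset.mem_of_mem_filter _ hζ
      have hζT' : ζ' ∈ T := Finset.mem_of_mem_filter _ hζ'
      have heq : ζ = ζ' := hkey ζ hζT ζ' hζT' (xL ζ) (habsL ζ hζT) (by rw [← hx]; exact habsR ζ' hζT')
      have h1 := (hxLmem ζ hζT).1.2
      have h2 := (hxRmem ζ' hζT').1.1
      rw [hx, ← heq] at h2
      linarith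
    set I : Finset ℝ := FL.image xL ∪ FR.image xR with hI
    have hIcard : r ≤ I.card := by
      rw [hI, Finset.card_union_of_disjoint hdisj,
        Finset.card_image_of_injOn hinjL, Finset.card_image_of_injOn hinjR]
      exact hcnt
    have hIsub : (I : Set ℝ) ⊆ {t : ℝ | t ∈ Ioo (0:ℝ) 1 ∧ f t = s * δ} := by
      intro x hx
      simp only [hI, Finset.coe_union, Set.mem_union, Finset.coe_image, Set.mem_image,
        Finset.mem_coe] at hx
      rcases hx with ⟨ζ, hζ, rfl⟩ | ⟨ζ, hζ, rfl⟩
      · have hζT : ζ ∈ T := Finset.mem_of_mem_filter _ hζ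
        have hs' : sL ζ = s := (Finset.mem_filter.mp hζ).2
        obtain ⟨⟨hb1, hb2⟩, _⟩ := hsep ζ hζT
        have h := (hxLmem ζ hζT).1
        exact ⟨⟨by linarith [h.1], by linarith [h.2, ((hmemT ζ).mp hζT).1.2]⟩,
          by rw [(hxLmem ζ hζT).2, hs']⟩
      · have hζT : ζ ∈ T := Finset.mem_of_mem_filter _ hζ
        have hs' : sR ζ = s := (Finset.mem_filter.mp hζ).2
        obtain ⟨⟨hb1, hb2⟩, _⟩ := hsep ζ hζT
        have h := (hxRmem ζ hζT).1
        exact ⟨⟨by linarith [h.1, ((hmemT ζ).mp hζT).1.1], by linarith [h.2]⟩,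
          by rw [(hxRmem ζ hζT).2, hs']⟩
    calc (r : ℕ∞) ≤ (I.card : ℕ∞) := by exact_mod_cast hIcard
      _ = (I : Set ℝ).encard := (Set.encard_coe_eq_coe_finsetCard I).symm
      _ ≤ _ := Set.encard_le_encard hIsub
  -- assembling the answer for a given sign
  have Hfinal : ∀ s : ℝ, (s = 1 ∨ s = -1) →
      (r : ℕ∞) ≤ {t : ℝ | t ∈ Ioo (0:ℝ) 1 ∧ f t = s * δ}.encard →
      ∃ c' : Fin k → ℝ,
      (r : ℕ∞) ≤ {t : ℝ | t ∈ Set.Ioo (0 : ℝ) 1 ∧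
          1 + ∑ i, c' i * t ^ (e i).1 * (1 - t) ^ (e i).2 = 0}.encard ∧
      ∀ t ∈ Set.Ioo (0 : ℝ) 1,
        1 + ∑ i, c' i * t ^ (e i).1 * (1 - t) ^ (e i).2 = 0 →
        deriv (fun u : ℝ => 1 + ∑ i, c' i * u ^ (e i).1 * (1 - u) ^ (e i).2) t ≠ 0 := by
    intro s hs hcard
    have hsδ : (1:ℝ) - s * δ ≠ 0 := by
      rcases hs with rfl | rfl
      · simp; linarith
      · simp; linarith
    have hsδV : s * δ ∉ V := by
      rcases hs with rfl | rfl
      · simpa using hδV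
      · simpa using hδV'
    refine ⟨fun i => c i / (1 - s * δ), ?_, ?_⟩
    · have hset : {t : ℝ | t ∈ Set.Ioo (0 : ℝ) 1 ∧
          1 + ∑ i, (c i / (1 - s * δ)) * t ^ (e i).1 * (1 - t) ^ (e i).2 = 0} =
          {t : ℝ | t ∈ Ioo (0:ℝ) 1 ∧ f t = s * δ} := by
        ext t
        simp only [Set.mem_setOf_eq, and_congr_right_iff]
        intro _
        rw [scaleAux c e hsδ t, div_eq_zero_iff]
        constructor
        · rintro (h | h)
          · exact sub_eq_zero.mp h
          · exact absurd h hsδ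
        · intro h
          exact Or.inl (sub_eq_zero.mpr h)
      rw [hset]
      exact hcard
    · intro t ht hroot
      have hft : f t = s * δ := by
        have h := hroot
        rw [scaleAux c e hsδ t, div_eq_zero_iff] at h
        rcases h with h | h
        · exact sub_eq_zero.mp h
        · exact absurd h hsδ
      have hEq : (fun u : ℝ => 1 + ∑ i, (c i / (1 - s * δ)) * u ^ (e i).1 * (1 - u) ^ (e i).2)
          = fun u : ℝ => (f u - s * δ) / (1 - s * δ) := funext fun u => scaleAux c e hsδ u
      rw [hEq]
      have hderiv : deriv (fun u : ℝ => (f u - s * δ) / (1 - s * δ)) t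
          = deriv f t / (1 - s * δ) := by
        rw [deriv_div_const, deriv_sub_const]
      rw [hderiv]
      intro h0
      have hdf : deriv f t = 0 := by
        field_simp at h0
        simpa using h0
      exact hsδV ⟨t, ⟨ht, hdf⟩, hft⟩
  -- pigeonhole over the signs
  have hLpart : (T.filter (fun ζ => sL ζ = 1)).card + (T.filter (fun ζ => sL ζ = -1)).card = r := by
    have hpart := Finset.card_filter_add_card_filter_not (s := T)
      (p := fun ζ => sL ζ = 1)
    have hfe : T.filter (fun ζ => ¬ sL ζ = 1) = T.filter (fun ζ => sL ζ = -1) := by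
      apply Finset.filter_congr
      intro ζ hζ
      rcases (hspec ζ hζ).1 with h' | h' <;> norm_num [h']
    rw [hfe, hcardT] at hpart
    exact hpart
  have hRpart : (T.filter (fun ζ => sR ζ = 1)).card + (T.filter (fun ζ => sR ζ = -1)).card = r := by
    have hpart := Finset.card_filter_add_card_filter_not (s := T)
      (p := fun ζ => sR ζ = 1)
    have hfe : T.filter (fun ζ => ¬ sR ζ = 1) = T.filter (fun ζ => sR ζ = -1) := by
      apply Finset.filter_congr
      intro ζ hζ
      rcases (hspec ζ hζ).2.2.2.1 with h' | h' <;> norm_num [h']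
    rw [hfe, hcardT] at hpart
    exact hpart
  by_cases hc : r ≤ (T.filter (fun ζ => sL ζ = 1)).card + (T.filter (fun ζ => sR ζ = 1)).card
  · exact Hfinal 1 (Or.inl rfl) (Hcount 1 hc)
  · have hc' : r ≤ (T.filter (fun ζ => sL ζ = (-1:ℝ))).card
        + (T.filter (fun ζ => sR ζ = (-1:ℝ))).card := by omega
    exact Hfinal (-1) (Or.inr rfl) (Hcount (-1) hc')
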